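/- As n → ∞, the number |T_n| of rooted binary phylogenetic trees with leaf set a nonempty subset of [n] satisfies |T_n| ~ sqrt(e/(π n³)) · 2^{n-1} · n!. -/

import Mathlib

open Filter Real Topology
open scoped Nat

private lemma dfact_succ (t : ℕ) (ht : 1 ≤ t) :
    (2*(t+1)-3)‼ = (2*t-1) * (2*t-3)‼ := by
  match t, ht with
  | 1, _ => rfl
  | (r+2), _ =>
    have h1 : 2*(r+2+1)-3 = (2*r+1)+2 := by omega
    have h2 : 2*(r+2)-3 = 2*r+1 := by omega
    have h3 : 2*(r+2)-1 = 2*r+3 := by omega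
    rw [h1, h2, h3, Nat.doubleFactorial_add_two]

private lemma dfact_prod (j : ℕ) (hj : 1 ≤ j) (m : ℕ) :
    (2*(j+m)-3)‼ = (2*j-3)‼ * ∏ i ∈ Finset.range m, (2*(j+i)-1) := by
  induction m with
  | zero => simp
  | succ m ih =>
    have h1 : j + (m+1) = (j+m) + 1 := by omega
    rw [h1, dfact_succ (j+m) (by omega), ih, Finset.prod_range_succ]
    ring

private lemma prod_reflect (n k : ℕ) (h : k < n) :
    ∏ i ∈ Finset.range k, (2*((n-k)+i)-1) = ∏ i ∈ Finset.range k, (2*(n-i)-3) := by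
  rw [← Finset.prod_range_reflect (fun i => (2*(n-i)-3))]
  refine Finset.prod_congr rfl fun i hi => ?_
  simp only [Finset.mem_range] at hi
  omega

private lemma dfact_split (n k : ℕ) (h : k < n) :
    (2*n-3)‼ = (2*(n-k)-3)‼ * ∏ i ∈ Finset.range k, (2*(n-i)-3) := by
  have := dfact_prod (n-k) (by omega) k
  rw [← prod_reflect n k h]
  have h2 : n - k + k = n := by omega
  rwa [h2] at this

noncomputable def Ptree (n k : ℕ) : ℝ :=
  ∏ i ∈ Finset.range k, ((n:ℝ) - i) / (2*(n:ℝ) - 2*i - 3)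

noncomputable def Ftree (n k : ℕ) : ℝ := if k < n then Ptree n k / (k)! else 0

private lemma P_eq (n k : ℕ) (h : k < n) :
    Ptree n k = (n.descFactorial k : ℝ) / ((∏ i ∈ Finset.range k, (2*(n-i)-3) : ℕ) : ℝ) := by
  rw [Ptree, Nat.descFactorial_eq_prod_range, Nat.cast_prod, Nat.cast_prod,
    ← Finset.prod_div_distrib]
  refine Finset.prod_congr rfl fun i hi => ?_
  simp only [Finset.mem_range] at hi
  have h1 : ((n - i : ℕ) : ℝ) = (n:ℝ) - i := by
    have : i ≤ n := by omega
    push_cast [this]; ring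
  have h2 : ((2*(n-i)-3 : ℕ) : ℝ) = 2*(n:ℝ) - 2*i - 3 := by
    have h3 : 2*(n-i)-3 = 2*n - 2*i - 3 := by omega
    rw [h3]
    have : 3 ≤ 2*n - 2*i := by omega
    push_cast [Nat.sub_sub, this, (by omega : 2*i+3 ≤ 2*n)]
    ring
  rw [h1, h2]

private lemma den_prod_pos (n k : ℕ) (h : k < n) :
    0 < ∏ i ∈ Finset.range k, (2*(n-i)-3) :=
  Finset.prod_pos fun i hi => by simp only [Finset.mem_range] at hi; omega

private lemma key (n k : ℕ) (h : k < n) :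
    (n.choose (n-k) : ℝ) * ((2*(n-k)-3)‼ : ℕ) = ((2*n-3)‼ : ℕ) * Ptree n k / (k)! := by
  have hQ : (0:ℝ) < ((∏ i ∈ Finset.range k, (2*(n-i)-3) : ℕ) : ℝ) := by
    exact_mod_cast den_prod_pos n k h
  have hk : ((k)! : ℝ) ≠ 0 := by positivity
  have hsplit : ((2*n-3)‼ : ℕ) = ((2*(n-k)-3)‼ : ℕ) * ∏ i ∈ Finset.range k, (2*(n-i)-3) :=
    dfact_split n k h
  have hchoose : (n.choose (n-k)) * (k)! = n.descFactorial k := by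
    rw [Nat.choose_symm (by omega : k ≤ n), Nat.descFactorial_eq_factorial_mul_choose, mul_comm]
  rw [P_eq n k h, mul_div_assoc', div_div, eq_div_iff (by positivity)]
  push_cast [hsplit, ← hchoose]
  ring

private lemma sum_eq (n : ℕ) :
    ∑ j ∈ Finset.Icc 1 n, ((n.choose j : ℝ) * ((2*j-3)‼ : ℕ))
      = ((2*n-3)‼ : ℕ) * ∑' k, Ftree n k := by
  have h1 : ∑' k, Ftree n k = ∑ k ∈ Finset.range n, (Ptree n k / (k)!) := by
    rw [tsum_eq_sum (s := Finset.range n) (f := Ftree n) ?_]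
    · exact Finset.sum_congr rfl fun k hk => by
        simp only [Finset.mem_range] at hk
        simp [Ftree, hk]
    · intro k hk
      simp only [Finset.mem_range, not_lt] at hk
      simp [Ftree, Nat.not_lt.mpr hk]
  rw [h1, Finset.mul_sum]
  have h2 : ∑ j ∈ Finset.Icc 1 n, ((n.choose j : ℝ) * ((2*j-3)‼ : ℕ))
      = ∑ i ∈ Finset.range n, ((n.choose (1+i) : ℝ) * ((2*(1+i)-3)‼ : ℕ)) := by
    rw [← Finset.Ico_add_one_right_eq_Icc, Finset.sum_Ico_eq_sum_range]
    norm_num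
  rw [h2, ← Finset.sum_range_reflect]
  refine Finset.sum_congr rfl fun k hk => ?_
  simp only [Finset.mem_range] at hk
  have h3 : 1 + (n - 1 - k) = n - k := by omega
  rw [h3, key n k hk]
  ring

private lemma factor_tendsto (i : ℕ) :
    Tendsto (fun n : ℕ => ((n:ℝ) - i) / (2*(n:ℝ) - 2*i - 3)) atTop (𝓝 (1/2)) := by
  have h0 : Tendsto (fun n : ℕ => ((n:ℝ))⁻¹) atTop (𝓝 0) := tendsto_inv_atTop_nhds_zero_nat
  have hnum : Tendsto (fun n : ℕ => 1 - i * ((n:ℝ))⁻¹) atTop (𝓝 1) := by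
    have := h0.const_mul (i:ℝ)
    simpa using (tendsto_const_nhds (x := (1:ℝ))).sub this
  have hden : Tendsto (fun n : ℕ => 2 - (2*i+3) * ((n:ℝ))⁻¹) atTop (𝓝 2) := by
    have := h0.const_mul ((2*i+3 : ℝ))
    simpa using (tendsto_const_nhds (x := (2:ℝ))).sub this
  have := hnum.div hden (by norm_num)
  refine this.congr' ?_
  filter_upwards [eventually_ge_atTop (i+2)] with n hn
  have hi2 : (i:ℝ) + 2 ≤ n := by exact_mod_cast hn
  have hn0 : (0:ℝ) < n := by linarith
  have hd : (0:ℝ) < 2*(n:ℝ) - 2*i - 3 := by linarith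
  have hdd : (2:ℝ) - (2*(i:ℝ)+3)*((n:ℝ))⁻¹ = (2*(n:ℝ) - 2*i - 3) / n := by
    field_simp
    ring
  rw [Pi.div_apply, hdd, div_eq_div_iff (div_pos hd hn0).ne' hd.ne']
  field_simp

private lemma Ptree_tendsto (k : ℕ) :
    Tendsto (fun n : ℕ => Ptree n k) atTop (𝓝 ((1/2:ℝ)^k)) := by
  have h : Tendsto (fun n : ℕ => ∏ i ∈ Finset.range k, ((n:ℝ) - i) / (2*(n:ℝ) - 2*i - 3))
      atTop (𝓝 (∏ _i ∈ Finset.range k, (1/2:ℝ))) :=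
    tendsto_finset_prod _ fun i _ => factor_tendsto i
  simpa [Ptree] using h

private lemma Ftree_tendsto (k : ℕ) :
    Tendsto (fun n : ℕ => Ftree n k) atTop (𝓝 ((1/2:ℝ)^k / (k)!)) := by
  refine ((Ptree_tendsto k).div_const _).congr' ?_
  filter_upwards [eventually_gt_atTop k] with n hn
  simp [Ftree, hn]

private lemma Ftree_bound (n k : ℕ) : ‖Ftree n k‖ ≤ (2:ℝ)^k / (k)! := by
  rcases lt_or_ge k n with h | h
  · have hfac : ∀ i ∈ Finset.range k, (0:ℝ) ≤ ((n:ℝ) - i) / (2*(n:ℝ) - 2*i - 3) ∧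
        ((n:ℝ) - i) / (2*(n:ℝ) - 2*i - 3) ≤ 2 := by
      intro i hi
      simp only [Finset.mem_range] at hi
      have hi2 : (i:ℝ) + 2 ≤ n := by exact_mod_cast (by omega : i + 2 ≤ n)
      have hd : (0:ℝ) < 2*(n:ℝ) - 2*i - 3 := by linarith
      constructor
      · apply div_nonneg (by linarith) hd.le
      · rw [div_le_iff₀ hd]; linarith
    have hP0 : 0 ≤ Ptree n k := Finset.prod_nonneg fun i hi => (hfac i hi).1
    have hP2 : Ptree n k ≤ 2^k := by
      calc Ptree n k ≤ ∏ _i ∈ Finset.range k, (2:ℝ) :=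
            Finset.prod_le_prod (fun i hi => (hfac i hi).1) (fun i hi => (hfac i hi).2)
        _ = 2^k := by simp
    have : Ftree n k = Ptree n k / (k)! := by simp [Ftree, h]
    rw [this, Real.norm_eq_abs, abs_of_nonneg (by positivity)]
    gcongr
  · have : Ftree n k = 0 := by simp [Ftree, Nat.not_lt.mpr h]
    rw [this, norm_zero]
    positivity

private lemma tsum_Ftree_tendsto :
    Tendsto (fun n : ℕ => ∑' k, Ftree n k) atTop (𝓝 (Real.sqrt (Real.exp 1))) := by
  have hsum : Summable (fun k : ℕ => (2:ℝ)^k / (k)!) := Real.summable_pow_div_factorial 2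
  have h := tendsto_tsum_of_dominated_convergence (f := Ftree)
      (g := fun k => (1/2:ℝ)^k / (k)!) (bound := fun k => (2:ℝ)^k / (k)!)
      hsum (fun k => Ftree_tendsto k) (Eventually.of_forall fun n k => Ftree_bound n k)
  have hval : ∑' k : ℕ, ((1/2:ℝ)^k / (k)!) = Real.sqrt (Real.exp 1) := by
    have h1 : Real.exp (1/2) = ∑' k : ℕ, ((1/2:ℝ)^k / (k)!) := by
      rw [Real.exp_eq_exp_ℝ, NormedSpace.exp_eq_tsum_div]
    have h2 : Real.exp (1/2) * Real.exp (1/2) = Real.exp 1 := by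
      rw [← Real.exp_add]; norm_num
    rw [← h1, ← h2, Real.sqrt_mul_self (Real.exp_pos _).le]
  rwa [hval] at h

private lemma dfact_formula (m : ℕ) :
    ((2*(m+2)-3)‼ : ℕ) * (2^(m+1) * (m+1)!) = (2*m+2)! := by
  have h1 : 2*(m+2)-3 = 2*m+1 := by omega
  have h2 : (2*m+1+1)! = (2*m+1+1)‼ * (2*m+1)‼ := Nat.factorial_eq_mul_doubleFactorial (2*m+1)
  have h3 : (2*(m+1))‼ = 2^(m+1) * (m+1)! := Nat.doubleFactorial_two_mul (m+1)
  have h4 : 2*(m+1) = 2*m+1+1 := by ring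
  rw [h4] at h3
  rw [h1, show 2*m+2 = 2*m+1+1 by ring, h2, h3]
  ring

private lemma sqrt_target (m : ℕ) :
    Real.sqrt (Real.exp 1 / (Real.pi * ((m:ℝ)+2)^3))
      = Real.sqrt (Real.exp 1) / (Real.sqrt Real.pi * ((m:ℝ)+2) * Real.sqrt ((m:ℝ)+2)) := by
  have hn : (0:ℝ) < (m:ℝ)+2 := by positivity
  have key : (Real.sqrt (Real.exp 1) / (Real.sqrt Real.pi * ((m:ℝ)+2) * Real.sqrt ((m:ℝ)+2)))^2
      = Real.exp 1 / (Real.pi * ((m:ℝ)+2)^3) := by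
    rw [div_pow, mul_pow, mul_pow, Real.sq_sqrt (Real.exp_pos 1).le,
      Real.sq_sqrt Real.pi_pos.le, Real.sq_sqrt hn.le]
    ring
  rw [← key, Real.sqrt_sq (by positivity)]

private lemma stirling_sq (t : ℕ) (ht : 1 ≤ t) :
    (Stirling.stirlingSeq t)^2 = ((t)! : ℝ)^2 / (2*t * (((t:ℝ))/Real.exp 1)^(2*t)) := by
  have ht0 : (0:ℝ) < t := by exact_mod_cast ht
  rw [Stirling.stirlingSeq, div_pow, mul_pow, Real.sq_sqrt (by positivity), ← pow_mul,
    mul_comm t 2]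

private lemma stirling_pos (t : ℕ) (ht : 1 ≤ t) : 0 < Stirling.stirlingSeq t := by
  obtain ⟨s, rfl⟩ : ∃ s, t = s + 1 := ⟨t - 1, by omega⟩
  exact Stirling.stirlingSeq'_pos s

private lemma stirling_ratio (q : ℕ) (hq : 1 ≤ q) :
    ((2*q)! : ℝ) / ((q)! : ℝ)^2 =
      Stirling.stirlingSeq (2*q) / (Stirling.stirlingSeq q)^2 * 4^q / Real.sqrt q := by
  have hq0 : (0:ℝ) < q := by exact_mod_cast hq
  have hst1 := stirling_pos (2*q) (by omega)
  have hst2 := stirling_pos q hq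
  have hL : (0:ℝ) ≤ ((2*q)! : ℝ) / ((q)! : ℝ)^2 := by positivity
  have hR : (0:ℝ) ≤ Stirling.stirlingSeq (2*q) / (Stirling.stirlingSeq q)^2 * 4^q
      / Real.sqrt q := by positivity
  rw [← Real.sqrt_sq hL, ← Real.sqrt_sq hR]
  congr 1
  rw [div_pow, div_pow, mul_pow, div_pow, stirling_sq (2*q) (by omega), stirling_sq q hq,
    Real.sq_sqrt hq0.le]
  have hcast : ((2*q : ℕ) : ℝ) = 2*(q:ℝ) := by push_cast; ring
  rw [hcast]
  have hp : (2*(q:ℝ)/Real.exp 1)^(2*(2*q)) = 16^q * (((q:ℝ)/Real.exp 1)^(2*q))^2 := by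
    rw [mul_div_assoc, mul_pow, ← pow_mul, show 2*(2*q) = 4*q by ring,
      show 2*q*2 = 4*q by ring, show (16:ℝ)^q = 2^(4*q) by
        rw [show (16:ℝ) = 2^4 by norm_num, ← pow_mul]]
  rw [hp]
  have hfq : ((q)! : ℝ) ≠ 0 := by positivity
  have hpow : ((q:ℝ)/Real.exp 1)^(2*q) ≠ 0 := by positivity
  field_simp
  rw [show (16:ℝ)^q = 4^(q*2) by rw [show (16:ℝ) = 4^2 by norm_num, ← pow_mul, mul_comm]]
  ring

private noncomputable def Etree (m : ℕ) : ℝ :=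
  Stirling.stirlingSeq (2*(m+1)) / (Stirling.stirlingSeq (m+1))^2
    * (Real.sqrt Real.pi / Real.sqrt (Real.exp 1))
    * Real.sqrt (((m:ℝ)+2)/((m:ℝ)+1))

private lemma Etree_tendsto :
    Tendsto Etree atTop (𝓝 (Real.sqrt (Real.exp 1))⁻¹) := by
  have hA1 : Tendsto (fun m : ℕ => Stirling.stirlingSeq (2*(m+1))) atTop
      (𝓝 (Real.sqrt Real.pi)) :=
    Stirling.tendsto_stirlingSeq_sqrt_pi.comp
      (tendsto_atTop_mono (fun m => by simp only [id_eq]; omega) tendsto_id)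
  have hA2 : Tendsto (fun m : ℕ => Stirling.stirlingSeq (m+1)) atTop
      (𝓝 (Real.sqrt Real.pi)) :=
    Stirling.tendsto_stirlingSeq_sqrt_pi.comp
      (tendsto_atTop_mono (fun m => by simp only [id_eq]; omega) tendsto_id)
  have hR1 : Tendsto (fun m : ℕ => Stirling.stirlingSeq (2*(m+1)) /
      (Stirling.stirlingSeq (m+1))^2) atTop (𝓝 (Real.sqrt Real.pi / Real.pi)) := by
    have := hA1.div (hA2.pow 2) (by rw [Real.sq_sqrt Real.pi_pos.le]; exact Real.pi_ne_zero)
    rwa [Real.sq_sqrt Real.pi_pos.le] at this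
  have hR2 : Tendsto (fun m : ℕ => Real.sqrt (((m:ℝ)+2)/((m:ℝ)+1))) atTop (𝓝 1) := by
    have h0 : Tendsto (fun m : ℕ => (((m:ℝ)+1))⁻¹) atTop (𝓝 0) := by
      have hx : Tendsto (fun m : ℕ => (m:ℝ)+1) atTop atTop :=
        tendsto_atTop_add_const_right _ 1 tendsto_natCast_atTop_atTop
      have := tendsto_inv_atTop_zero.comp hx
      simpa [Function.comp_def] using this
    have hq : Tendsto (fun m : ℕ => ((m:ℝ)+2)/((m:ℝ)+1)) atTop (𝓝 1) := by
      have heq : ∀ m : ℕ, ((m:ℝ)+2)/((m:ℝ)+1) = 1 + (((m:ℝ)+1))⁻¹ := by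
        intro m
        have h1 : ((m:ℝ)+1) ≠ 0 := by positivity
        field_simp
        ring
      have := (tendsto_const_nhds (x := (1:ℝ))).add h0
      simp only [add_zero] at this
      exact (this.congr (fun m => (heq m).symm))
    have := (Real.continuous_sqrt.tendsto 1).comp hq
    simpa [Function.comp_def] using this
  have hlim := (hR1.mul (tendsto_const_nhds
      (x := Real.sqrt Real.pi / Real.sqrt (Real.exp 1)))).mul hR2
  have hval : Real.sqrt Real.pi / Real.pi * (Real.sqrt Real.pi / Real.sqrt (Real.exp 1)) * 1
      = (Real.sqrt (Real.exp 1))⁻¹ := by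
    rw [mul_one, div_mul_div_comm, Real.mul_self_sqrt Real.pi_pos.le,
      div_mul_eq_div_div, div_self Real.pi_ne_zero, one_div]
  rw [← hval]
  exact hlim

private lemma dfact_ratio_eq (m : ℕ) :
    (((2*(m+2)-3)‼ : ℕ) : ℝ) /
      (Real.sqrt (Real.exp 1 / (Real.pi * (((m+2 : ℕ)):ℝ)^3)) * 2^(m+2-1) * ((m+2)!))
      = Etree m := by
  have hc : (((m+2:ℕ)):ℝ) = (m:ℝ)+2 := by push_cast; ring
  have hc1 : (((m+1:ℕ)):ℝ) = (m:ℝ)+1 := by push_cast; ring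
  have hst2 := stirling_pos (m+1) (by omega)
  have hdR : (((2*(m+2)-3)‼ : ℕ) : ℝ) = ((2*m+2)! : ℝ) / (2^(m+1) * ((m+1)! : ℝ)) := by
    rw [eq_div_iff (by positivity)]
    exact_mod_cast dfact_formula m
  have hf2 : ((2*m+2)! : ℝ) = (Stirling.stirlingSeq (2*(m+1)) / (Stirling.stirlingSeq (m+1))^2
      * 4^(m+1) / Real.sqrt ((m:ℝ)+1)) * ((m+1)! : ℝ)^2 := by
    have h := stirling_ratio (m+1) (by omega)
    rw [show 2*(m+1) = 2*m+2 by ring, hc1] at h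
    exact ((div_eq_iff (by positivity)).mp h)
  have hfact2 : ((m+2)! : ℝ) = ((m:ℝ)+2) * ((m+1)! : ℝ) := by
    rw [show m+2 = (m+1)+1 by ring, Nat.factorial_succ]
    push_cast; ring
  rw [show m+2-1 = m+1 from rfl, hc, sqrt_target m, hdR, hf2, hfact2, Etree,
    Real.sqrt_div (by positivity : (0:ℝ) ≤ (m:ℝ)+2)]
  have h1 : Real.sqrt (Real.exp 1) ≠ 0 := by positivity
  have h2 : Real.sqrt Real.pi ≠ 0 := by positivity
  have h3 : Real.sqrt ((m:ℝ)+2) ≠ 0 := by positivity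
  have h4 : Real.sqrt ((m:ℝ)+1) ≠ 0 := by positivity
  have h5 : ((m+1)! : ℝ) ≠ 0 := by positivity
  have h6 : ((m:ℝ)+2) ≠ 0 := by positivity
  have h7 : Stirling.stirlingSeq (m+1) ≠ 0 := hst2.ne'
  field_simp
  rw [show (4:ℝ)^(m+1) = 2^(m+1) * 2^(m+1) by rw [← mul_pow]; norm_num]
  ring

/- STATEMENT 3: |T_n| = ∑_{j=1}^n C(n,j)·(2j-3)!! satisfies
|T_n| ~ sqrt(e/(π n³))·2^{n-1}·n!  as n → ∞. -/
theorem trees_on_subsets_asymptotics :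
    Tendsto (fun n : ℕ =>
        (∑ j ∈ Finset.Icc 1 n, (n.choose j * Nat.doubleFactorial (2 * j - 3) : ℝ)) /
          (Real.sqrt (Real.exp 1 / (Real.pi * (n : ℝ) ^ 3)) * 2 ^ (n - 1) * n.factorial))
      atTop (nhds 1) := by
  have h2 : Tendsto (fun n : ℕ => (((2*n-3)‼ : ℕ) : ℝ) /
      (Real.sqrt (Real.exp 1 / (Real.pi * (n:ℝ)^3)) * 2^(n-1) * ((n)! : ℕ))) atTop
      (𝓝 (Real.sqrt (Real.exp 1))⁻¹) := by
    rw [← Filter.tendsto_add_atTop_iff_nat 2]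
    exact Etree_tendsto.congr (fun m => (dfact_ratio_eq m).symm)
  have h1 : Tendsto (fun n : ℕ =>
      (∑ j ∈ Finset.Icc 1 n, ((n.choose j : ℝ) * ((2*j-3)‼ : ℕ))) / (((2*n-3)‼ : ℕ) : ℝ))
      atTop (𝓝 (Real.sqrt (Real.exp 1))) := by
    refine tsum_Ftree_tendsto.congr (fun n => ?_)
    have hdR : (((2*n-3)‼ : ℕ) : ℝ) ≠ 0 := by
      exact_mod_cast (Nat.doubleFactorial_pos _).ne'
    rw [sum_eq n, mul_div_cancel_left₀ _ hdR]
  have h3 := h1.mul h2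
  rw [mul_inv_cancel₀ (by positivity : Real.sqrt (Real.exp 1) ≠ 0)] at h3
  refine h3.congr (fun n => ?_)
  have hdR : (((2*n-3)‼ : ℕ) : ℝ) ≠ 0 := by
    exact_mod_cast (Nat.doubleFactorial_pos _).ne'
  rw [div_mul_div_comm, mul_comm (∑ j ∈ Finset.Icc 1 n, ((n.choose j : ℝ) * ((2*j-3)‼ : ℕ)))
    (((2*n-3)‼ : ℕ) : ℝ), mul_div_mul_left _ _ hdR]
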